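/- For every integer n ≥ 1 and all z: (z−1) · (d/dz) P_n(z; α, β) = n · ( P_n(z; α, β) − ((n+α+β)/(n+α)) · P_{n−1}(z; α, β) ). -/

import Mathlib

open Finset

/-- Pochhammer symbol `(a)_k = a (a+1) ⋯ (a+k-1)`. -/
noncomputable def poch (a : ℝ) (k : ℕ) : ℝ := ∏ i ∈ Finset.range k, (a + (i : ℝ))

/-- The Hendriksen–van Rossum polynomial `P_n(z; α, β)`. -/
noncomputable def HR (α β : ℝ) (n : ℕ) (z : ℝ) : ℝ :=
  (poch β n / poch (α + 1) n) *
    ∑ k ∈ Finset.range (n + 1),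
      poch (-(n : ℝ)) k * poch (α + 1) k /
          (poch (1 - β - (n : ℝ)) k * (Nat.factorial k : ℝ)) * z ^ k

/-- `d_m(α,β) = −(m+β)/(m+α+1)`. -/
noncomputable def dco (α β m : ℝ) : ℝ := -(m + β) / (m + α + 1)

/-- `b_m(α,β) = −m(m+α+β)/((m+α)(m+α+1))`. -/
noncomputable def bco (α β m : ℝ) : ℝ := -(m * (m + α + β)) / ((m + α) * (m + α + 1))

noncomputable def Aco (α β : ℝ) (n k : ℕ) : ℝ :=
  poch (-(n : ℝ)) k * poch (α + 1) k /
      (poch (1 - β - (n : ℝ)) k * (Nat.factorial k : ℝ))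

lemma HR_eq (α β : ℝ) (n : ℕ) (z : ℝ) :
    HR α β n z = (poch β n / poch (α + 1) n) *
      ∑ k ∈ Finset.range (n + 1), Aco α β n k * z ^ k := rfl

lemma poch_succ (a : ℝ) (k : ℕ) : poch a (k+1) = poch a k * (a + k) :=
  Finset.prod_range_succ _ _

lemma poch_succ' (a : ℝ) (k : ℕ) : poch a (k+1) = a * poch (a+1) k := by
  rw [poch, Finset.prod_range_succ']
  simp only [Nat.cast_zero, add_zero]
  rw [mul_comm, poch]
  congr 1
  apply Finset.prod_congr rfl
  intro i _
  push_cast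
  ring

lemma poch_ne_zero (a : ℝ) (k : ℕ) (h : ∀ i < k, a + (i:ℝ) ≠ 0) : poch a k ≠ 0 := by
  rw [poch, Finset.prod_ne_zero_iff]
  intro i hi
  exact h i (Finset.mem_range.mp hi)

lemma poch_neg_nat (n : ℕ) : poch (-(n:ℝ)) (n+1) = 0 := by
  rw [poch_succ]
  simp

lemma HR_hasDeriv (α β : ℝ) (n : ℕ) (z : ℝ) :
    HasDerivAt (HR α β n)
      ((poch β n / poch (α + 1) n) *
        ∑ k ∈ Finset.range (n + 1), Aco α β n k * ((k:ℝ) * z ^ (k-1))) z := by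
  have h : ∀ k ∈ Finset.range (n+1),
      HasDerivAt (fun x : ℝ => Aco α β n k * x ^ k) (Aco α β n k * ((k:ℝ) * z ^ (k-1))) z :=
    fun k _ => (hasDerivAt_pow k z).const_mul _
  exact (HasDerivAt.fun_sum h).const_mul (poch β n / poch (α + 1) n)

lemma coeff_id (α β : ℝ) (hα : ∀ m : ℤ, α ≠ (m : ℝ)) (hβ : ∀ m : ℤ, β ≠ (m : ℝ))
    (m k : ℕ) :
    (poch β (m+1) / poch (α+1) (m+1)) *
        (Aco α β (m+1) k * (k:ℝ) - Aco α β (m+1) (k+1) * ((k:ℝ)+1))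
      = ((m:ℝ)+1) * ((poch β (m+1) / poch (α+1) (m+1)) * Aco α β (m+1) k
          - (((m:ℝ)+1+α+β) / (((m:ℝ)+1)+α)) *
              ((poch β m / poch (α+1) m) * Aco α β m k)) := by
  have hm1 : ((m:ℝ)+1) ≠ 0 := by positivity
  have hk1 : ((k:ℝ)+1) ≠ 0 := by positivity
  have hF : ((Nat.factorial k : ℕ) : ℝ) ≠ 0 := by
    exact_mod_cast (Nat.factorial_pos k).ne'
  have hβi : ∀ i : ℕ, 1 - β - ((m:ℝ)+1) + (i:ℝ) ≠ 0 := by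
    intro i h
    apply hβ ((i:ℤ) - m)
    push_cast
    linarith
  have hr : poch (1-β-((m:ℝ)+1)) k ≠ 0 :=
    poch_ne_zero _ _ (fun i _ => hβi i)
  have hrk : 1-β-((m:ℝ)+1)+(k:ℝ) ≠ 0 := hβi k
  have hr0 : 1-β-((m:ℝ)+1) ≠ 0 := by
    have := hβi 0
    simpa using this
  have hαi : ∀ i : ℕ, α + 1 + (i:ℝ) ≠ 0 := by
    intro i h
    apply hα (-(1:ℤ) - i)
    push_cast
    linarith
  have hqm0 : poch (α+1) m ≠ 0 := poch_ne_zero _ _ (fun i _ => hαi i)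
  have hαm : α+1+(m:ℝ) ≠ 0 := hαi m
  have hαm2 : (m:ℝ)+1+α ≠ 0 := by
    intro h; exact hαm (by linarith)
  have h1 : poch (-((m:ℝ)+1)) (k+1) = poch (-((m:ℝ)+1)) k * (-((m:ℝ)+1) + k) :=
    poch_succ _ _
  have h2 : poch (α+1) (k+1) = poch (α+1) k * (α+1+k) := poch_succ _ _
  have h3 : poch (1-β-((m:ℝ)+1)) (k+1)
      = poch (1-β-((m:ℝ)+1)) k * (1-β-((m:ℝ)+1)+k) := poch_succ _ _
  have hpm : poch β (m+1) = poch β m * (β + m) := poch_succ _ _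
  have hqm : poch (α+1) (m+1) = poch (α+1) m * (α+1+m) := poch_succ _ _
  have e1 : poch (-((m:ℝ)+1)) (k+1) = (-((m:ℝ)+1)) * poch (-(m:ℝ)) k := by
    have := poch_succ' (-((m:ℝ)+1)) k
    have earg : -((m:ℝ)+1)+1 = -(m:ℝ) := by ring
    rwa [earg] at this
  have h5 : poch (-(m:ℝ)) k
      = poch (-((m:ℝ)+1)) k * (((m:ℝ)+1) - k) / ((m:ℝ)+1) := by
    rw [eq_div_iff hm1]
    linear_combination -(e1.symm.trans h1)
  have e2 : poch (1-β-((m:ℝ)+1)) (k+1)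
      = (1-β-((m:ℝ)+1)) * poch (1-β-(m:ℝ)) k := by
    have := poch_succ' (1-β-((m:ℝ)+1)) k
    have earg : 1-β-((m:ℝ)+1)+1 = 1-β-(m:ℝ) := by ring
    rwa [earg] at this
  have h6 : poch (1-β-(m:ℝ)) k
      = poch (1-β-((m:ℝ)+1)) k * (1-β-((m:ℝ)+1)+k) / (1-β-((m:ℝ)+1)) := by
    rw [eq_div_iff hr0]
    linear_combination e2.symm.trans h3
  simp only [Aco, Nat.factorial_succ]
  push_cast
  rw [h1, h2, h3, hpm, hqm, h5, h6]
  field_simp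
  ring

lemma key (α β : ℝ) (hα : ∀ m : ℤ, α ≠ (m : ℝ)) (hβ : ∀ m : ℤ, β ≠ (m : ℝ))
    (m : ℕ) (z : ℝ) :
    (z - 1) * deriv (HR α β (m+1)) z
      = ((m:ℝ)+1) * (HR α β (m+1) z
          - (((m:ℝ)+1+α+β) / (((m:ℝ)+1)+α)) * HR α β m z) := by
  rw [(HR_hasDeriv α β (m+1) z).deriv, HR_eq, HR_eq]
  set C := poch β (m+1) / poch (α+1) (m+1) with hC
  set C' := poch β m / poch (α+1) m with hC'
  set D := ((m:ℝ)+1+α+β) / (((m:ℝ)+1)+α) with hD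
  have hA0 : Aco α β (m+1) (m+1+1) = 0 := by
    unfold Aco
    rw [poch_neg_nat (m+1)]
    simp
  have hB0 : Aco α β m (m+1) = 0 := by
    simp [Aco, poch_neg_nat m]
  have e1 : z * (∑ k ∈ Finset.range (m+1+1), Aco α β (m+1) k * ((k:ℝ) * z^(k-1)))
      = ∑ k ∈ Finset.range (m+1+1), (Aco α β (m+1) k * (k:ℝ)) * z^k := by
    rw [Finset.mul_sum]
    refine Finset.sum_congr rfl fun k _ => ?_
    cases k with
    | zero => simp
    | succ j =>
      rw [Nat.add_sub_cancel]
      push_cast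
      rw [pow_succ]
      ring
  have e2 : (∑ k ∈ Finset.range (m+1+1), Aco α β (m+1) k * ((k:ℝ) * z^(k-1)))
      = ∑ k ∈ Finset.range (m+1+1), (Aco α β (m+1) (k+1) * ((k:ℝ)+1)) * z^k := by
    rw [Finset.sum_range_succ' (fun k => Aco α β (m+1) k * ((k:ℝ) * z^(k-1))) (m+1),
      Finset.sum_range_succ (fun k => (Aco α β (m+1) (k+1) * ((k:ℝ)+1)) * z^k) (m+1)]
    simp only [Nat.cast_zero, zero_mul, mul_zero, add_zero, hA0]
    refine Finset.sum_congr rfl fun k _ => ?_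
    rw [Nat.add_sub_cancel]
    push_cast
    ring
  have e3 : ∑ k ∈ Finset.range (m+1), Aco α β m k * z^k
      = ∑ k ∈ Finset.range (m+1+1), Aco α β m k * z^k := by
    rw [Finset.sum_range_succ (fun k => Aco α β m k * z^k) (m+1), hB0, zero_mul, add_zero]
  rw [e3]
  have lhs_eq : (z - 1) * (C * ∑ k ∈ Finset.range (m+1+1), Aco α β (m+1) k * ((k:ℝ) * z^(k-1)))
      = ∑ k ∈ Finset.range (m+1+1),
          (C * (Aco α β (m+1) k * (k:ℝ) - Aco α β (m+1) (k+1) * ((k:ℝ)+1))) * z^k := by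
    have : (z - 1) * (C * ∑ k ∈ Finset.range (m+1+1), Aco α β (m+1) k * ((k:ℝ) * z^(k-1)))
        = C * (z * ∑ k ∈ Finset.range (m+1+1), Aco α β (m+1) k * ((k:ℝ) * z^(k-1)))
          - C * (∑ k ∈ Finset.range (m+1+1), Aco α β (m+1) k * ((k:ℝ) * z^(k-1))) := by
      ring
    rw [this, e1, e2, Finset.mul_sum, Finset.mul_sum, ← Finset.sum_sub_distrib]
    exact Finset.sum_congr rfl fun k _ => by ring
  have rhs_eq : ((m:ℝ)+1) * (C * ∑ k ∈ Finset.range (m+1+1), Aco α β (m+1) k * z^k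
        - D * (C' * ∑ k ∈ Finset.range (m+1+1), Aco α β m k * z^k))
      = ∑ k ∈ Finset.range (m+1+1),
          (((m:ℝ)+1) * (C * Aco α β (m+1) k - D * (C' * Aco α β m k))) * z^k := by
    simp only [Finset.mul_sum, ← Finset.sum_sub_distrib]
    exact Finset.sum_congr rfl fun k _ => by ring
  rw [lhs_eq, rhs_eq]
  refine Finset.sum_congr rfl fun k _ => ?_
  rw [coeff_id α β hα hβ m k]

/-- `(z−1) · (d/dz) P_n(z; α, β) = n(P_n(z; α, β) − ((n+α+β)/(n+α)) P_{n−1}(z; α, β))`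
for `n ≥ 1`. -/
theorem stmt7 (α β : ℝ)
    (hα : ∀ m : ℤ, α ≠ (m : ℝ)) (hβ : ∀ m : ℤ, β ≠ (m : ℝ))
    (hαβ : ∀ m : ℤ, α + β ≠ (m : ℝ))
    (n : ℕ) (hn : 1 ≤ n) (z : ℝ) :
    (z - 1) * deriv (HR α β n) z
      = (n : ℝ) * (HR α β n z - ((n : ℝ) + α + β) / ((n : ℝ) + α) * HR α β (n - 1) z) := by
  obtain ⟨m, rfl⟩ : ∃ m, n = m + 1 := ⟨n - 1, (Nat.succ_pred_eq_of_pos hn).symm⟩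
  have := key α β hα hβ m z
  push_cast
  simpa using this
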